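/- Let Δ_u be the unnormalized Laplacian of an undirected weighted graph with maximal degree d = max_i d_i, and let h > 0. Then the Jacobi iteration matrix of hΔ_u + iI is J = (hD + iI)^{−1} h W, and its maximum-row-sum norm is ‖J‖_∞ = hd/√(h²d² + 1) < 1. -/

import Mathlib

open Matrix Complex Finset

noncomputable section

/-- Degree of vertex `i`: sum of weights of edges incident to `i`. -/
def gDegree {n : ℕ} (W : Matrix (Fin n) (Fin n) ℝ) (i : Fin n) : ℝ :=
  ∑ j ∈ Finset.univ.erase i, W i j

/-- Unnormalized graph Laplacian `Δ_u = D − W`. -/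
def unLaplacian {n : ℕ} (W : Matrix (Fin n) (Fin n) ℝ) : Matrix (Fin n) (Fin n) ℝ :=
  Matrix.diagonal (gDegree W) - W

/-- Normalized graph Laplacian `Δ_n = I − D^{-1/2} W D^{-1/2}`. -/
def normLaplacian {n : ℕ} (W : Matrix (Fin n) (Fin n) ℝ) : Matrix (Fin n) (Fin n) ℝ :=
  1 - Matrix.diagonal (fun i => (Real.sqrt (gDegree W i))⁻¹) * W *
      Matrix.diagonal (fun i => (Real.sqrt (gDegree W i))⁻¹)

/-- Complexification of a real matrix. -/
def cplx {n : ℕ} (Δ : Matrix (Fin n) (Fin n) ℝ) : Matrix (Fin n) (Fin n) ℂ :=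
  Δ.map Complex.ofReal

/-- The matrix `hΔ − iI`. -/
def cayleyNum {n : ℕ} (Δ : Matrix (Fin n) (Fin n) ℝ) (hz : ℝ) : Matrix (Fin n) (Fin n) ℂ :=
  (hz : ℂ) • cplx Δ - Complex.I • 1

/-- The matrix `hΔ + iI`. -/
def cayleyDen {n : ℕ} (Δ : Matrix (Fin n) (Fin n) ℝ) (hz : ℝ) : Matrix (Fin n) (Fin n) ℂ :=
  (hz : ℂ) • cplx Δ + Complex.I • 1

/-- The Cayley transform `C(hΔ) = (hΔ − iI)(hΔ + iI)⁻¹` of a scaled matrix. -/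
def cayleyOp {n : ℕ} (Δ : Matrix (Fin n) (Fin n) ℝ) (hz : ℝ) : Matrix (Fin n) (Fin n) ℂ :=
  cayleyNum Δ hz * (cayleyDen Δ hz)⁻¹

/-- Cayley filter `g_{c,h}(Δ) = c₀ I + 2 Re { Σ_{j=1}^r c_j (hΔ−iI)^j (hΔ+iI)^{−j} }`
(entrywise real part). -/
def cayleyFilter {n : ℕ} (Δ : Matrix (Fin n) (Fin n) ℝ) (hz : ℝ) (r : ℕ)
    (c₀ : ℝ) (c : ℕ → ℂ) : Matrix (Fin n) (Fin n) ℝ :=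
  c₀ • (1 : Matrix (Fin n) (Fin n) ℝ) +
    (2 : ℝ) • (∑ j ∈ Finset.Icc 1 r,
      c j • (cayleyNum Δ hz ^ j * ((cayleyDen Δ hz)⁻¹) ^ j)).map Complex.re

/-- Euclidean (`L₂`) norm of a finite signal. -/
def l2norm {n : ℕ} {𝕜 : Type*} [RCLike 𝕜] (v : Fin n → 𝕜) : ℝ :=
  Real.sqrt (∑ i, ‖v i‖ ^ 2)

/-- Operator norm induced by the Euclidean norm. -/
def l2opNorm {n : ℕ} (A : Matrix (Fin n) (Fin n) ℂ) : ℝ :=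
  sSup {t : ℝ | ∃ x : Fin n → ℂ, l2norm x = 1 ∧ t = l2norm (A *ᵥ x)}

/-- Maximum-row-sum norm `‖A‖_∞ = max_i Σ_k |a_{ik}|`. -/
def rowSumNorm {n : ℕ} (A : Matrix (Fin n) (Fin n) ℂ) : ℝ :=
  sSup (Set.range fun i => ∑ k, ‖A i k‖)

/-- Diagonal part `Diag(A)` of a matrix. -/
def diagPart {n : ℕ} (A : Matrix (Fin n) (Fin n) ℂ) : Matrix (Fin n) (Fin n) ℂ :=
  Matrix.diagonal fun i => A i i

/-- Off-diagonal part `Off(A) = A − Diag(A)` of a matrix. -/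
def offPart {n : ℕ} (A : Matrix (Fin n) (Fin n) ℂ) : Matrix (Fin n) (Fin n) ℂ :=
  A - diagPart A

/-- Jacobi iteration matrix `J = −Diag(A)⁻¹ Off(A)`. -/
def jacobiMatrix {n : ℕ} (A : Matrix (Fin n) (Fin n) ℂ) : Matrix (Fin n) (Fin n) ℂ :=
  -((diagPart A)⁻¹ * offPart A)

/-- Jacobi iterations `x^{(k+1)} = J x^{(k)} + b`, initialized at `x^{(0)} = b`. -/
def jacobiIter {n : ℕ} (J : Matrix (Fin n) (Fin n) ℂ) (b : Fin n → ℂ) : ℕ → (Fin n → ℂ)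
  | 0 => b
  | (k+1) => J *ᵥ jacobiIter J b k + b

/-- The Jacobi approximation scheme: `ỹ₀ = f` and, for `j ≥ 1`, `ỹ_j` is the result of `K`
Jacobi iterations for the system `(hΔ+iI) y = (hΔ−iI) ỹ_{j-1}`, initialized at
`b_j = Diag(hΔ+iI)⁻¹ (hΔ−iI) ỹ_{j-1}`. -/
def jacobiScheme {n : ℕ} (Δ : Matrix (Fin n) (Fin n) ℝ) (hz : ℝ) (K : ℕ)
    (f : Fin n → ℝ) : ℕ → (Fin n → ℂ)
  | 0 => fun i => (f i : ℂ)
  | (j+1) =>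
      jacobiIter (jacobiMatrix (cayleyDen Δ hz))
        ((diagPart (cayleyDen Δ hz))⁻¹ *ᵥ (cayleyNum Δ hz *ᵥ jacobiScheme Δ hz K f j)) K

/-- The normalized Jacobi approximation scheme: as `jacobiScheme`, but each `ỹ_j` (`j ≥ 1`)
is rescaled so that `‖ỹ_j‖₂ = ‖f‖₂`. -/
def jacobiSchemeN {n : ℕ} (Δ : Matrix (Fin n) (Fin n) ℝ) (hz : ℝ) (K : ℕ)
    (f : Fin n → ℝ) : ℕ → (Fin n → ℂ)
  | 0 => fun i => (f i : ℂ)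
  | (j+1) =>
      let y := jacobiIter (jacobiMatrix (cayleyDen Δ hz))
        ((diagPart (cayleyDen Δ hz))⁻¹ *ᵥ (cayleyNum Δ hz *ᵥ jacobiSchemeN Δ hz K f j)) K
      (l2norm f / l2norm y) • y

/-- Approximate Cayley filter output `G̃f = c₀ ỹ₀ + 2 Re Σ_{j=1}^r c_j ỹ_j` (Jacobi scheme). -/
def approxCayley {n : ℕ} (Δ : Matrix (Fin n) (Fin n) ℝ) (hz : ℝ) (r : ℕ)
    (c₀ : ℝ) (c : ℕ → ℂ) (K : ℕ) (f : Fin n → ℝ) : Fin n → ℝ :=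
  fun i => c₀ * f i + 2 * (∑ j ∈ Finset.Icc 1 r, c j * jacobiScheme Δ hz K f j i).re

/-- Approximate Cayley filter output for the normalized Jacobi scheme. -/
def approxCayleyN {n : ℕ} (Δ : Matrix (Fin n) (Fin n) ℝ) (hz : ℝ) (r : ℕ)
    (c₀ : ℝ) (c : ℕ → ℂ) (K : ℕ) (f : Fin n → ℝ) : Fin n → ℝ :=
  fun i => c₀ * f i + 2 * (∑ j ∈ Finset.Icc 1 r, c j * jacobiSchemeN Δ hz K f j i).re

/-- `k`-hop neighborhood of vertex `m` w.r.t. an adjacency relation `A`: all vertices reachable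
from `m` by a path of at most `k` edges. -/
def khop {n : ℕ} (A : Fin n → Fin n → Prop) : ℕ → Fin n → Set (Fin n)
  | 0, m => {m}
  | (k+1), m => khop A k m ∪ {l | ∃ v ∈ khop A k m, A v l}

/-- Delta signal at vertex `m`. -/
def deltaSig {n : ℕ} (m : Fin n) : Fin n → ℝ :=
  fun i => if i = m then 1 else 0


lemma aux_mono (hz : ℝ) (hhz : 0 < hz) {a b : ℝ} (ha : 0 ≤ a) (hab : a ≤ b) :
    hz * a / Real.sqrt ((hz * a) ^ 2 + 1) ≤ hz * b / Real.sqrt ((hz * b) ^ 2 + 1) := by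
  have h1 : (0:ℝ) < Real.sqrt ((hz*a)^2 + 1) := Real.sqrt_pos.2 (by positivity)
  have h2 : (0:ℝ) < Real.sqrt ((hz*b)^2 + 1) := Real.sqrt_pos.2 (by positivity)
  rw [div_le_div_iff₀ h1 h2]
  have ha' : (0:ℝ) ≤ hz * a := mul_nonneg hhz.le ha
  have hb' : (0:ℝ) ≤ hz * b := mul_nonneg hhz.le (ha.trans hab)
  have e1 : hz * a * Real.sqrt ((hz*b)^2 + 1) = Real.sqrt ((hz*a)^2 * ((hz*b)^2 + 1)) := by
    rw [Real.sqrt_mul (sq_nonneg (hz*a)), Real.sqrt_sq ha']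
  have e2 : hz * b * Real.sqrt ((hz*a)^2 + 1) = Real.sqrt ((hz*b)^2 * ((hz*a)^2 + 1)) := by
    rw [Real.sqrt_mul (sq_nonneg (hz*b)), Real.sqrt_sq hb']
  rw [e1, e2]
  apply Real.sqrt_le_sqrt
  nlinarith [mul_le_mul hab hab ha (ha.trans hab), sq_nonneg hz, sq_nonneg (hz*a), sq_nonneg (hz*b)]

lemma gDegree_nonneg {n : ℕ} (W : Matrix (Fin n) (Fin n) ℝ) (hnn : ∀ i j, 0 ≤ W i j)
    (i : Fin n) : 0 ≤ gDegree W i :=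
  Finset.sum_nonneg fun j _ => hnn i j

lemma sum_row_eq_gDegree {n : ℕ} (W : Matrix (Fin n) (Fin n) ℝ)
    (hdiag : ∀ i, W i i = 0) (i : Fin n) : ∑ k, W i k = gDegree W i := by
  rw [gDegree, Finset.sum_erase _ (hdiag i)]

lemma cayleyDen_decomp {n : ℕ} (W : Matrix (Fin n) (Fin n) ℝ)
    (hdiag : ∀ i, W i i = 0) (hz : ℝ) :
    cayleyDen (unLaplacian W) hz
      = Matrix.diagonal (fun i => ((hz * gDegree W i : ℝ) : ℂ) + Complex.I)
        + (-(hz:ℂ)) • cplx W := by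
  ext i j
  simp only [cayleyDen, unLaplacian, cplx, Matrix.add_apply, Matrix.smul_apply,
    Matrix.map_apply, Matrix.sub_apply, Matrix.diagonal_apply, Matrix.one_apply,
    smul_eq_mul]
  by_cases h : i = j
  · subst h
    simp [hdiag i]
  · simp [h]

lemma aux_vne {x : ℝ} : ((x : ℂ) + Complex.I) ≠ 0 := by
  intro hc
  have := congrArg Complex.im hc
  simp at this

lemma aux_inv_diagonal {n : ℕ} (v : Fin n → ℂ) (h : ∀ i, v i ≠ 0) :
    (Matrix.diagonal v)⁻¹ = Matrix.diagonal (fun i => (v i)⁻¹) :=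
  Matrix.inv_eq_right_inv (by
    rw [Matrix.diagonal_mul_diagonal]
    convert Matrix.diagonal_one
    exact mul_inv_cancel₀ (h _))

lemma diagPart_cayleyDen {n : ℕ} (W : Matrix (Fin n) (Fin n) ℝ)
    (hdiag : ∀ i, W i i = 0) (hz : ℝ) :
    diagPart (cayleyDen (unLaplacian W) hz)
      = Matrix.diagonal (fun i => ((hz * gDegree W i : ℝ) : ℂ) + Complex.I) := by
  rw [cayleyDen_decomp W hdiag hz]
  ext i j
  simp only [diagPart, Matrix.diagonal_apply, Matrix.add_apply, Matrix.smul_apply,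
    cplx, Matrix.map_apply, smul_eq_mul]
  by_cases h : i = j
  · subst h; simp [hdiag i]
  · simp [h]

lemma offPart_cayleyDen {n : ℕ} (W : Matrix (Fin n) (Fin n) ℝ)
    (hdiag : ∀ i, W i i = 0) (hz : ℝ) :
    offPart (cayleyDen (unLaplacian W) hz) = (-(hz:ℂ)) • cplx W := by
  rw [offPart, diagPart_cayleyDen W hdiag hz, cayleyDen_decomp W hdiag hz]
  abel

lemma jacobiMatrix_cayleyDen_eq {n : ℕ} (W : Matrix (Fin n) (Fin n) ℝ)
    (hdiag : ∀ i, W i i = 0) (hz : ℝ) :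
    jacobiMatrix (cayleyDen (unLaplacian W) hz)
      = Matrix.diagonal (fun i => (((hz * gDegree W i : ℝ) : ℂ) + Complex.I)⁻¹)
          * ((hz : ℂ) • cplx W) := by
  rw [jacobiMatrix, offPart_cayleyDen W hdiag hz, diagPart_cayleyDen W hdiag hz,
    aux_inv_diagonal _ (fun i => aux_vne)]
  rw [neg_smul, Matrix.mul_neg, neg_neg]

/-- For a general undirected weighted graph with maximal degree `d` and
`h > 0`, the Jacobi iteration matrix of `hΔ_u + iI` is `J = (hD + iI)⁻¹ h W`, and its
maximum-row-sum norm is `‖J‖_∞ = hd/√(h²d² + 1) < 1`. -/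
theorem jacobiMatrix_rowSumNorm {n : ℕ} (W : Matrix (Fin n) (Fin n) ℝ)
    (hsym : W.IsSymm) (hnn : ∀ i j, 0 ≤ W i j) (hdiag : ∀ i, W i i = 0)
    (d : ℝ) (hd : IsGreatest (Set.range (gDegree W)) d)
    (hz : ℝ) (hhz : 0 < hz) :
    jacobiMatrix (cayleyDen (unLaplacian W) hz)
      = ((hz : ℂ) • cplx (Matrix.diagonal (gDegree W)) + Complex.I • 1)⁻¹
          * ((hz : ℂ) • cplx W) ∧
    rowSumNorm (jacobiMatrix (cayleyDen (unLaplacian W) hz))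
      = hz * d / Real.sqrt ((hz * d) ^ 2 + 1) ∧
    hz * d / Real.sqrt ((hz * d) ^ 2 + 1) < 1 := by
  obtain ⟨i₀, hi₀⟩ := hd.1
  have hd0 : 0 ≤ d := hi₀ ▸ gDegree_nonneg W hnn i₀
  set v : Fin n → ℂ := fun i => ((hz * gDegree W i : ℝ) : ℂ) + Complex.I with hv
  have hveq : ∀ i, ‖v i‖ = Real.sqrt ((hz * gDegree W i) ^ 2 + 1) := by
    intro i
    have h1 : v i = ((hz * gDegree W i : ℝ) : ℂ) + ((1 : ℝ) : ℂ) * Complex.I := by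
      simp [hv]
    rw [h1, Complex.norm_add_mul_I]
    norm_num
  have hJ := jacobiMatrix_cayleyDen_eq W hdiag hz
  have hrow : ∀ i, (∑ k, ‖jacobiMatrix (cayleyDen (unLaplacian W) hz) i k‖)
      = hz * gDegree W i / Real.sqrt ((hz * gDegree W i) ^ 2 + 1) := by
    intro i
    have hentry : ∀ k, jacobiMatrix (cayleyDen (unLaplacian W) hz) i k
        = (v i)⁻¹ * ((hz : ℂ) * (W i k : ℂ)) := by
      intro k
      rw [hJ]
      simp [Matrix.mul_apply, Matrix.diagonal_apply, cplx, Matrix.map_apply,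
        Finset.sum_ite_eq, hv]
    calc (∑ k, ‖jacobiMatrix (cayleyDen (unLaplacian W) hz) i k‖)
        = ∑ k, ‖v i‖⁻¹ * (hz * W i k) := by
          refine Finset.sum_congr rfl fun k _ => ?_
          rw [hentry k, norm_mul, norm_inv]
          congr 1
          rw [show ((hz : ℂ) * (W i k : ℂ)) = ((hz * W i k : ℝ) : ℂ) by push_cast; ring,
            Complex.norm_real, Real.norm_eq_abs,
            _root_.abs_of_nonneg (mul_nonneg hhz.le (hnn i k))]
      _ = ‖v i‖⁻¹ * (hz * ∑ k, W i k) := by simp only [← Finset.mul_sum]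
      _ = hz * gDegree W i / Real.sqrt ((hz * gDegree W i) ^ 2 + 1) := by
          rw [sum_row_eq_gDegree W hdiag i, hveq i, div_eq_inv_mul]
  have hgnn : ∀ i, 0 ≤ gDegree W i := gDegree_nonneg W hnn
  have hgle : ∀ i, gDegree W i ≤ d := fun i => hd.2 ⟨i, rfl⟩
  refine ⟨?_, ?_, ?_⟩
  · rw [hJ]
    congr 1
    have : (hz : ℂ) • cplx (Matrix.diagonal (gDegree W)) + Complex.I • 1
        = Matrix.diagonal v := by
      ext i j
      simp only [Matrix.add_apply, Matrix.smul_apply, cplx, Matrix.map_apply,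
        Matrix.diagonal_apply, Matrix.one_apply, smul_eq_mul, hv]
      by_cases h : i = j
      · subst h; push_cast; simp
      · simp [h]
    rw [this, aux_inv_diagonal v (fun i => aux_vne)]
  · rw [rowSumNorm]
    have hgr : IsGreatest (Set.range fun i => ∑ k,
        ‖jacobiMatrix (cayleyDen (unLaplacian W) hz) i k‖)
        (hz * d / Real.sqrt ((hz * d) ^ 2 + 1)) := by
      constructor
      · refine ⟨i₀, ?_⟩
        show (∑ k, ‖jacobiMatrix (cayleyDen (unLaplacian W) hz) i₀ k‖) = _
        rw [hrow i₀, hi₀]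
      · rintro x ⟨i, rfl⟩
        show (∑ k, ‖jacobiMatrix (cayleyDen (unLaplacian W) hz) i k‖) ≤ _
        rw [hrow i]
        exact aux_mono hz hhz (hgnn i) (hgle i)
    exact hgr.csSup_eq
  · have hlt : hz * d < Real.sqrt ((hz * d) ^ 2 + 1) := by
      have : hz * d = Real.sqrt ((hz * d) ^ 2) := (Real.sqrt_sq (by positivity)).symm
      rw [this]
      exact Real.sqrt_lt_sqrt (by positivity) (by nlinarith [Real.sq_sqrt (show (0:ℝ) ≤ (hz*d)^2 by positivity)])
    rw [div_lt_one (Real.sqrt_pos.2 (by positivity))]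
    exact hlt

end
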